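/- Let 𝒢 = (V, ω) be a connected finite weighted graph with at least two vertices and all degrees positive. Let A be the Markov operator of 𝒢, and let μ₂ = sup { Re⟨Af, f⟩_ν / ⟨f, f⟩_ν : f : V → ℂ, f ≠ 0, ∑_s ν(s) f(s) = 0 }, where ⟨f, g⟩_ν = ∑_s ν(s) f(s) conj(g(s)). Then μ₂ < 1 and π_{2,𝒢}(ℂ) = 1/√(2 − 2μ₂). -/

import Mathlib

open scoped BigOperators
open Finset MeasureTheory

noncomputable section

variable {V : Type*}

def wdeg [Fintype V] (ω : V → V → ℝ) (s : V) : ℝ := ∑ t, ω s t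

def nu [Fintype V] (ω : V → V → ℝ) (s : V) : ℝ := wdeg ω s / ∑ t, wdeg ω t

def edgeP [Fintype V] (ω : V → V → ℝ) (s t : V) : ℝ := ω s t / ∑ u, ∑ v, ω u v

def SymmW (ω : V → V → ℝ) : Prop := ∀ s t, ω s t = ω t s

def NonnegW (ω : V → V → ℝ) : Prop := ∀ s t, 0 ≤ ω s t

def ConnW (ω : V → V → ℝ) : Prop := (SimpleGraph.fromRel fun s t => 0 < ω s t).Connected

def lpNormW [Fintype V] (ω : V → V → ℝ) (p : ℝ) {X : Type*} [NormedAddCommGroup X]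
    (f : V → X) : ℝ := (∑ s, nu ω s * ‖f s‖ ^ p) ^ (1 / p)

def gradNormW [Fintype V] (ω : V → V → ℝ) (p : ℝ) {X : Type*} [NormedAddCommGroup X]
    (f : V → X) : ℝ := (∑ s, ∑ t, edgeP ω s t * ‖f t - f s‖ ^ p) ^ (1 / p)

def poincareConst [Fintype V] (ω : V → V → ℝ) (p : ℝ) (X : Type*) [NormedAddCommGroup X] : ℝ :=
  sInf {π : ℝ | 0 ≤ π ∧
    ∀ f : V → X, (⨅ x : X, lpNormW ω p fun s => f s - x) ≤ π * gradNormW ω p f}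

def markovW [Fintype V] (ω : V → V → ℝ) {X : Type*} [AddCommGroup X] [Module ℝ X]
    (f : V → X) (s : V) : X := (wdeg ω s)⁻¹ • ∑ t, ω s t • f t

section Helpers

variable [Fintype V] (ω : V → V → ℝ)

/-- L²-mass. -/
def Nfun (f : V → ℂ) : ℝ := ∑ s, nu ω s * ‖f s‖ ^ 2

/-- Real part of ⟨Af, f⟩. -/
def Qre (f : V → ℂ) : ℝ := (∑ s, (nu ω s : ℂ) * markovW ω f s * (starRingEnd ℂ) (f s)).re

/-- Dirichlet energy. -/
def Egy (f : V → ℂ) : ℝ := ∑ s, ∑ t, edgeP ω s t * ‖f t - f s‖ ^ 2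

/-- Mean. -/
def meanC (f : V → ℂ) : ℂ := ∑ s, (nu ω s : ℂ) * f s

lemma norm_sub_sq_complex (z w : ℂ) :
    ‖z - w‖ ^ 2 = ‖z‖ ^ 2 + ‖w‖ ^ 2 - 2 * (z * (starRingEnd ℂ) w).re := by
  simp only [← Complex.normSq_eq_norm_sq]
  exact Complex.normSq_sub z w

lemma Dsum_pos [Nonempty V] (hdeg : ∀ s, 0 < wdeg ω s) : 0 < ∑ s, wdeg ω s :=
  Finset.sum_pos (fun s _ => hdeg s) Finset.univ_nonempty

lemma nu_pos [Nonempty V] (hdeg : ∀ s, 0 < wdeg ω s) (s : V) : 0 < nu ω s :=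
  div_pos (hdeg s) (Dsum_pos ω hdeg)

lemma sum_nu [Nonempty V] (hdeg : ∀ s, 0 < wdeg ω s) : ∑ s, nu ω s = 1 := by
  rw [show ∑ s, nu ω s = (∑ s, wdeg ω s) / (∑ s, wdeg ω s) by
    rw [Finset.sum_div]; rfl]
  exact div_self (Dsum_pos ω hdeg).ne'

lemma edgeP_eq (s t : V) : edgeP ω s t = ω s t / ∑ u, wdeg ω u := rfl

lemma Nfun_nonneg [Nonempty V] (hdeg : ∀ s, 0 < wdeg ω s) (f : V → ℂ) : 0 ≤ Nfun ω f :=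
  Finset.sum_nonneg fun s _ => mul_nonneg (nu_pos ω hdeg s).le (by positivity)

lemma Nfun_pos [Nonempty V] (hdeg : ∀ s, 0 < wdeg ω s) {f : V → ℂ} (hf : f ≠ 0) :
    0 < Nfun ω f := by
  obtain ⟨s, hs⟩ : ∃ s, f s ≠ 0 := by
    by_contra h; push_neg at h; exact hf (funext h)
  refine Finset.sum_pos' (fun t _ => mul_nonneg (nu_pos ω hdeg t).le (by positivity))
    ⟨s, Finset.mem_univ s, ?_⟩
  exact mul_pos (nu_pos ω hdeg s) (pow_pos (norm_pos_iff.mpr hs) 2)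

lemma edgeP_nonneg (hnn : NonnegW ω) [Nonempty V] (hdeg : ∀ s, 0 < wdeg ω s) (s t : V) :
    0 ≤ edgeP ω s t :=
  div_nonneg (hnn s t) (by
    have := Dsum_pos ω hdeg
    exact le_of_lt (by simpa [wdeg] using this))

lemma Egy_nonneg (hnn : NonnegW ω) [Nonempty V] (hdeg : ∀ s, 0 < wdeg ω s) (f : V → ℂ) :
    0 ≤ Egy ω f :=
  Finset.sum_nonneg fun s _ => Finset.sum_nonneg fun t _ =>
    mul_nonneg (edgeP_nonneg ω hnn hdeg s t) (by positivity)

lemma Qre_eq [Nonempty V] (hdeg : ∀ s, 0 < wdeg ω s) (f : V → ℂ) :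
    Qre ω f = ∑ s, ∑ t, ω s t / (∑ u, wdeg ω u) * (f t * (starRingEnd ℂ) (f s)).re := by
  unfold Qre
  rw [Complex.re_sum]
  refine Finset.sum_congr rfl fun s _ => ?_
  have h1 : (nu ω s : ℂ) * markovW ω f s * (starRingEnd ℂ) (f s)
      = ∑ t, ((ω s t / (∑ u, wdeg ω u) : ℝ) : ℂ) * (f t * (starRingEnd ℂ) (f s)) := by
    simp only [markovW, Complex.real_smul, Complex.ofReal_inv, Finset.mul_sum, Finset.sum_mul]
    refine Finset.sum_congr rfl fun t _ => ?_
    have hds : ((wdeg ω s : ℝ) : ℂ) ≠ 0 := Complex.ofReal_ne_zero.mpr (hdeg s).ne'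
    have hD : ((∑ u, wdeg ω u : ℝ) : ℂ) ≠ 0 :=
      Complex.ofReal_ne_zero.mpr (Dsum_pos ω hdeg).ne'
    have hco : nu ω s * (wdeg ω s)⁻¹ * ω s t = ω s t / (∑ u, wdeg ω u) := by
      rw [show nu ω s = wdeg ω s / (∑ u, wdeg ω u) from rfl]
      rw [div_mul_eq_mul_div, div_mul_eq_mul_div, mul_inv_cancel₀ (hdeg s).ne', one_mul]
    calc (nu ω s : ℂ) * ((((wdeg ω s : ℝ) : ℂ))⁻¹ * (((ω s t : ℝ) : ℂ) * f t))
          * (starRingEnd ℂ) (f s)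
        = ((nu ω s * (wdeg ω s)⁻¹ * ω s t : ℝ) : ℂ) * (f t * (starRingEnd ℂ) (f s)) := by
          push_cast; ring
      _ = ((ω s t / (∑ u, wdeg ω u) : ℝ) : ℂ) * (f t * (starRingEnd ℂ) (f s)) := by
          rw [hco]
  rw [h1, Complex.re_sum]
  exact Finset.sum_congr rfl fun t _ => Complex.re_ofReal_mul _ _

lemma key_identity [Nonempty V] (hsym : SymmW ω) (hdeg : ∀ s, 0 < wdeg ω s) (f : V → ℂ) :
    Egy ω f = 2 * Nfun ω f - 2 * Qre ω f := by
  have hB : ∀ g : V → ℂ,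
      (∑ s, ∑ t, ω s t / (∑ u, wdeg ω u) * ‖g s‖ ^ 2) = Nfun ω g := by
    intro g
    refine Finset.sum_congr rfl fun s _ => ?_
    rw [← Finset.sum_mul, ← Finset.sum_div]
    rfl
  have hA : (∑ s, ∑ t, ω s t / (∑ u, wdeg ω u) * ‖f t‖ ^ 2) = Nfun ω f := by
    rw [Finset.sum_comm]
    refine Finset.sum_congr rfl fun t _ => ?_
    rw [← Finset.sum_mul, ← Finset.sum_div]
    have hsum : ∑ s, ω s t = wdeg ω t :=
      Finset.sum_congr rfl fun s _ => hsym s t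
    rw [hsum]
    rfl
  have hterm : ∀ s t : V, edgeP ω s t * ‖f t - f s‖ ^ 2
      = ω s t / (∑ u, wdeg ω u) * ‖f t‖ ^ 2 + ω s t / (∑ u, wdeg ω u) * ‖f s‖ ^ 2
        - 2 * (ω s t / (∑ u, wdeg ω u) * (f t * (starRingEnd ℂ) (f s)).re) := by
    intro s t
    rw [show edgeP ω s t = ω s t / (∑ u, wdeg ω u) from rfl, norm_sub_sq_complex]
    ring
  have hmain : Egy ω f = Nfun ω f + Nfun ω f - 2 * Qre ω f := by
    unfold Egy
    simp only [hterm, Finset.sum_add_distrib, Finset.sum_sub_distrib, ← Finset.mul_sum]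
    rw [hA, hB f, Qre_eq ω hdeg f]
  rw [hmain]; ring

lemma Egy_sub_const (f : V → ℂ) (x : ℂ) : Egy ω (fun s => f s - x) = Egy ω f := by
  simp [Egy, sub_sub_sub_cancel_right]

lemma Nfun_sub_const [Nonempty V] (hdeg : ∀ s, 0 < wdeg ω s) (f : V → ℂ)
    (hm : meanC ω f = 0) (x : ℂ) :
    Nfun ω (fun s => f s - x) = Nfun ω f + ‖x‖ ^ 2 := by
  have hcross : ∑ s, nu ω s * (f s * (starRingEnd ℂ) x).re = 0 := by
    have h1 : ∑ s, nu ω s * (f s * (starRingEnd ℂ) x).re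
        = (∑ s, (nu ω s : ℂ) * f s * (starRingEnd ℂ) x).re := by
      rw [Complex.re_sum]
      exact Finset.sum_congr rfl fun s _ => by
        rw [mul_assoc, Complex.re_ofReal_mul]
    rw [h1, ← Finset.sum_mul, show (∑ s, (nu ω s : ℂ) * f s) = 0 from hm, zero_mul]
    simp
  have hsum : Nfun ω (fun s => f s - x)
      = ∑ s, (nu ω s * ‖f s‖ ^ 2 + nu ω s * ‖x‖ ^ 2
          - 2 * (nu ω s * (f s * (starRingEnd ℂ) x).re)) := by
    unfold Nfun
    exact Finset.sum_congr rfl fun s _ => by rw [norm_sub_sq_complex]; ring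
  rw [hsum, Finset.sum_sub_distrib, Finset.sum_add_distrib, ← Finset.sum_mul,
    ← Finset.mul_sum, sum_nu ω hdeg, hcross]
  unfold Nfun
  ring

lemma markov_smul (c : ℂ) (f : V → ℂ) (s : V) :
    markovW ω (fun t => c * f t) s = c * markovW ω f s := by
  simp only [markovW, Complex.real_smul, Complex.ofReal_inv, Finset.mul_sum]
  exact Finset.sum_congr rfl fun t _ => by ring

lemma Nfun_smul (c : ℂ) (f : V → ℂ) : Nfun ω (fun t => c * f t) = ‖c‖ ^ 2 * Nfun ω f := by
  simp only [Nfun, norm_mul, mul_pow, Finset.mul_sum]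
  exact Finset.sum_congr rfl fun t _ => by ring

lemma Qre_smul (c : ℂ) (f : V → ℂ) : Qre ω (fun t => c * f t) = ‖c‖ ^ 2 * Qre ω f := by
  have hc : c * (starRingEnd ℂ) c = ((‖c‖ ^ 2 : ℝ) : ℂ) := by
    rw [Complex.mul_conj]
    norm_cast
    simp [Complex.normSq_eq_norm_sq]
  unfold Qre
  rw [← Complex.re_ofReal_mul, Finset.mul_sum]
  congr 1
  refine Finset.sum_congr rfl fun s _ => ?_
  rw [markov_smul, map_mul, ← hc]
  ring

lemma meanC_smul (c : ℂ) (f : V → ℂ) : meanC ω (fun t => c * f t) = c * meanC ω f := by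
  simp only [meanC, Finset.mul_sum]
  exact Finset.sum_congr rfl fun t _ => by ring

lemma const_of_edge (hsym : SymmW ω) (hconn : ConnW ω) (f : V → ℂ)
    (hedge : ∀ s t, 0 < ω s t → f s = f t) (a b : V) : f a = f b := by
  obtain ⟨w⟩ := hconn.preconnected a b
  induction w with
  | nil => rfl
  | cons h p ih =>
    refine Eq.trans ?_ ih
    rw [SimpleGraph.fromRel_adj] at h
    rcases h.2 with h' | h'
    · exact hedge _ _ h'
    · exact (hedge _ _ h').symm

lemma exists_max [Nonempty V] (hdeg : ∀ s, 0 < wdeg ω s) (hV : 1 < Fintype.card V) :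
    ∃ f₀ : V → ℂ, meanC ω f₀ = 0 ∧ Nfun ω f₀ = 1 ∧
      ∀ g : V → ℂ, meanC ω g = 0 → Nfun ω g = 1 → Qre ω g ≤ Qre ω f₀ := by
  classical
  set K : Set (V → ℂ) := {f | meanC ω f = 0 ∧ Nfun ω f = 1} with hKdef
  have hmc : Continuous fun f : V → ℂ => meanC ω f := by
    unfold meanC
    exact continuous_finset_sum _ fun s _ => continuous_const.mul (continuous_apply s)
  have hNc : Continuous fun f : V → ℂ => Nfun ω f := by
    unfold Nfun
    exact continuous_finset_sum _ fun s _ =>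
      continuous_const.mul (((continuous_apply s).norm).pow 2)
  have hQc : Continuous fun f : V → ℂ => Qre ω f := by
    unfold Qre
    apply Complex.continuous_re.comp
    apply continuous_finset_sum
    intro s _
    refine Continuous.mul (Continuous.mul continuous_const ?_) ?_
    · unfold markovW
      exact (continuous_finset_sum _ fun t _ =>
        (continuous_apply t).const_smul (ω s t)).const_smul _
    · exact Complex.continuous_conj.comp (continuous_apply s)
  have hclosed : IsClosed K :=
    (isClosed_eq hmc continuous_const).inter (isClosed_eq hNc continuous_const)
  have hne : (Finset.univ : Finset V).Nonempty := Finset.univ_nonempty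
  set cm := Finset.univ.inf' hne (nu ω) with hcm
  have hcpos : 0 < cm := by
    rw [hcm, Finset.lt_inf'_iff]
    exact fun s _ => nu_pos ω hdeg s
  have hbdd : Bornology.IsBounded K := by
    rw [isBounded_iff_forall_norm_le]
    refine ⟨Real.sqrt (1 / cm), fun f hf => ?_⟩
    rw [pi_norm_le_iff_of_nonneg (Real.sqrt_nonneg _)]
    intro s
    have h1 : nu ω s * ‖f s‖ ^ 2 ≤ 1 := by
      rw [← hf.2]
      exact Finset.single_le_sum (f := fun t => nu ω t * ‖f t‖ ^ 2)
        (fun t _ => mul_nonneg (nu_pos ω hdeg t).le (by positivity)) (Finset.mem_univ s)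
    have h2 : cm ≤ nu ω s := Finset.inf'_le _ (Finset.mem_univ s)
    have h3 : ‖f s‖ ^ 2 ≤ 1 / cm := by
      rw [le_div_iff₀ hcpos]
      nlinarith [sq_nonneg ‖f s‖]
    calc ‖f s‖ = Real.sqrt (‖f s‖ ^ 2) := (Real.sqrt_sq (norm_nonneg _)).symm
      _ ≤ Real.sqrt (1 / cm) := Real.sqrt_le_sqrt h3
  have hcomp : IsCompact K := Metric.isCompact_of_isClosed_isBounded hclosed hbdd
  -- K is nonempty
  obtain ⟨a, b, hab⟩ := Fintype.exists_pair_of_one_lt_card hV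
  set g : V → ℂ := fun s =>
    if s = a then (((nu ω a : ℝ) : ℂ))⁻¹ else if s = b then -(((nu ω b : ℝ) : ℂ))⁻¹ else 0
    with hgdef
  have hga : g a = (((nu ω a : ℝ) : ℂ))⁻¹ := by simp [hgdef]
  have hnua : ((nu ω a : ℝ) : ℂ) ≠ 0 := Complex.ofReal_ne_zero.mpr (nu_pos ω hdeg a).ne'
  have hnub : ((nu ω b : ℝ) : ℂ) ≠ 0 := Complex.ofReal_ne_zero.mpr (nu_pos ω hdeg b).ne'
  have hgm : meanC ω g = 0 := by
    unfold meanC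
    have hterm : ∀ s, (nu ω s : ℂ) * g s
        = (if s = a then 1 else 0) + (if s = b then -1 else 0) := by
      intro s
      rcases eq_or_ne s a with rfl | hsa
      · simp [hgdef, hab, mul_inv_cancel₀ hnua]
      · rcases eq_or_ne s b with rfl | hsb
        · simp [hgdef, hsa, mul_inv_cancel₀ hnub]
        · simp [hgdef, hsa, hsb]
    simp only [hterm, Finset.sum_add_distrib]
    simp
  have hgne : g ≠ 0 := by
    intro h
    have h2 := congrFun h a
    rw [hga] at h2
    simp only [Pi.zero_apply, inv_eq_zero] at h2
    exact hnua h2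
  have hNg : 0 < Nfun ω g := Nfun_pos ω hdeg hgne
  have hKne : K.Nonempty := by
    refine ⟨fun s => (((Real.sqrt (Nfun ω g))⁻¹ : ℝ) : ℂ) * g s, ?_, ?_⟩
    · show meanC ω _ = 0
      rw [meanC_smul ω _ g, hgm, mul_zero]
    · show Nfun ω _ = 1
      rw [Nfun_smul]
      have hn : ‖(((Real.sqrt (Nfun ω g))⁻¹ : ℝ) : ℂ)‖ ^ 2 = (Nfun ω g)⁻¹ := by
        rw [Complex.norm_real, Real.norm_eq_abs, abs_of_nonneg (by positivity),
          inv_pow, Real.sq_sqrt hNg.le]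
      rw [hn, inv_mul_cancel₀ hNg.ne']
  obtain ⟨f₀, hf₀K, hf₀max⟩ := hcomp.exists_isMaxOn hKne hQc.continuousOn
  exact ⟨f₀, hf₀K.1, hf₀K.2, fun g' hg1 hg2 => hf₀max (⟨hg1, hg2⟩ : g' ∈ K)⟩

lemma lpNormW_two_eq {X : Type*} [NormedAddCommGroup X] (f : V → X) :
    lpNormW ω 2 f = Real.sqrt (∑ s, nu ω s * ‖f s‖ ^ 2) := by
  unfold lpNormW
  rw [Real.sqrt_eq_rpow]
  congr 1
  exact Finset.sum_congr rfl fun s _ => by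
    rw [show (2 : ℝ) = ((2 : ℕ) : ℝ) by norm_num, Real.rpow_natCast]

lemma gradNormW_two_eq (f : V → ℂ) : gradNormW ω 2 f = Real.sqrt (Egy ω f) := by
  unfold gradNormW Egy
  rw [Real.sqrt_eq_rpow]
  congr 1
  refine Finset.sum_congr rfl fun s _ => Finset.sum_congr rfl fun t _ => ?_
  rw [show (2 : ℝ) = ((2 : ℕ) : ℝ) by norm_num, Real.rpow_natCast]

end Helpers

/-- For a connected finite weighted graph with at least two vertices and positive
degrees, the quantity `μ₂ = sup { Re⟨Af,f⟩_ν/⟨f,f⟩_ν : f ≠ 0, mean zero }` satisfies `μ₂ < 1`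
and `π_{2,𝒢}(ℂ) = 1/√(2 - 2μ₂)`. -/
theorem stmt2 {V : Type*} [Fintype V] (hV : 1 < Fintype.card V)
    (ω : V → V → ℝ) (hsym : SymmW ω) (hnn : NonnegW ω) (hconn : ConnW ω)
    (hdeg : ∀ s, 0 < wdeg ω s)
    (μ₂ : ℝ)
    (hμ₂ : μ₂ = sSup {r : ℝ | ∃ f : V → ℂ, f ≠ 0 ∧ (∑ s, (nu ω s : ℂ) * f s) = 0 ∧
      r = (∑ s, (nu ω s : ℂ) * markovW ω f s * (starRingEnd ℂ) (f s)).re /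
            ∑ s, nu ω s * ‖f s‖ ^ 2}) :
    μ₂ < 1 ∧ poincareConst ω 2 ℂ = 1 / Real.sqrt (2 - 2 * μ₂) := by
  haveI : Nonempty V := Fintype.card_pos_iff.mp (by omega)
  have hs1 : (∑ s, (nu ω s : ℂ)) = 1 := by exact_mod_cast sum_nu ω hdeg
  obtain ⟨f₀, hm0, hN0, hmax⟩ := exists_max ω hdeg hV
  have hf₀ne : f₀ ≠ 0 := by
    intro h
    rw [h] at hN0
    simp [Nfun] at hN0
  have hgreat : IsGreatest {r : ℝ | ∃ f : V → ℂ, f ≠ 0 ∧ (∑ s, (nu ω s : ℂ) * f s) = 0 ∧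
      r = (∑ s, (nu ω s : ℂ) * markovW ω f s * (starRingEnd ℂ) (f s)).re /
            ∑ s, nu ω s * ‖f s‖ ^ 2} (Qre ω f₀) := by
    constructor
    · exact ⟨f₀, hf₀ne, hm0, by
        show Qre ω f₀ = Qre ω f₀ / Nfun ω f₀
        rw [hN0, div_one]⟩
    · rintro r ⟨f, hf0, hfm, rfl⟩
      have hNf := Nfun_pos ω hdeg hf0
      set c : ℝ := (Real.sqrt (Nfun ω f))⁻¹ with hcdef
      have hc2 : ‖((c : ℝ) : ℂ)‖ ^ 2 = (Nfun ω f)⁻¹ := by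
        rw [Complex.norm_real, Real.norm_eq_abs, abs_of_nonneg (by positivity), hcdef,
          inv_pow, Real.sq_sqrt hNf.le]
      have hgm2 : meanC ω (fun s => ((c : ℝ) : ℂ) * f s) = 0 := by
        rw [meanC_smul, show meanC ω f = 0 from hfm, mul_zero]
      have hgN2 : Nfun ω (fun s => ((c : ℝ) : ℂ) * f s) = 1 := by
        rw [Nfun_smul, hc2, inv_mul_cancel₀ hNf.ne']
      have h := hmax _ hgm2 hgN2
      rw [Qre_smul, hc2] at h
      show Qre ω f / Nfun ω f ≤ Qre ω f₀
      calc Qre ω f / Nfun ω f = (Nfun ω f)⁻¹ * Qre ω f := by rw [div_eq_mul_inv, mul_comm]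
        _ ≤ Qre ω f₀ := h
  have hμeq : μ₂ = Qre ω f₀ := by rw [hμ₂]; exact hgreat.csSup_eq
  -- strict positivity of the energy of f₀
  have hEpos : 0 < Egy ω f₀ := by
    have hnc : ¬ ∀ s t, 0 < ω s t → f₀ s = f₀ t := by
      intro hedge
      have hconst := const_of_edge ω hsym hconn f₀ hedge
      obtain ⟨a₀⟩ := ‹Nonempty V›
      have hmean : meanC ω f₀ = f₀ a₀ := by
        unfold meanC
        rw [Finset.sum_congr rfl (fun s _ => by rw [hconst s a₀]), ← Finset.sum_mul, hs1,
          one_mul]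
      have hz : f₀ a₀ = 0 := by rw [← hmean, hm0]
      exact hf₀ne (funext fun s => by rw [hconst s a₀, hz]; rfl)
    push_neg at hnc
    obtain ⟨s, t, hst, hne2⟩ := hnc
    have hterm : 0 < edgeP ω s t * ‖f₀ t - f₀ s‖ ^ 2 := by
      apply mul_pos
      · exact div_pos hst (by simpa [wdeg] using Dsum_pos ω hdeg)
      · have hz : f₀ t - f₀ s ≠ 0 := sub_ne_zero.mpr (Ne.symm hne2)
        exact pow_pos (norm_pos_iff.mpr hz) 2
    unfold Egy
    refine Finset.sum_pos' (fun u _ => Finset.sum_nonneg fun v _ =>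
      mul_nonneg (edgeP_nonneg ω hnn hdeg u v) (by positivity))
      ⟨s, Finset.mem_univ s, Finset.sum_pos' (fun v _ =>
        mul_nonneg (edgeP_nonneg ω hnn hdeg s v) (by positivity))
        ⟨t, Finset.mem_univ t, hterm⟩⟩
  have hkey0 : Egy ω f₀ = 2 - 2 * Qre ω f₀ := by
    rw [key_identity ω hsym hdeg, hN0]; ring
  have hμlt : μ₂ < 1 := by rw [hμeq]; linarith
  have h2 : 0 < 2 - 2 * μ₂ := by linarith
  have hsqrtpos : 0 < Real.sqrt (2 - 2 * μ₂) := Real.sqrt_pos.mpr h2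
  refine ⟨hμlt, ?_⟩
  have hcP : 0 ≤ 1 / Real.sqrt (2 - 2 * μ₂) ∧ ∀ f : V → ℂ,
      (⨅ x : ℂ, lpNormW ω 2 fun s => f s - x)
        ≤ (1 / Real.sqrt (2 - 2 * μ₂)) * gradNormW ω 2 f := by
    refine ⟨by positivity, fun f => ?_⟩
    set m := meanC ω f with hm
    have hbddr : BddBelow (Set.range fun x : ℂ => lpNormW ω 2 fun s => f s - x) := by
      refine ⟨0, ?_⟩
      rintro y ⟨x, rfl⟩
      show (0 : ℝ) ≤ lpNormW ω 2 fun s => f s - x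
      rw [lpNormW_two_eq]
      exact Real.sqrt_nonneg _
    have step1 : (⨅ x : ℂ, lpNormW ω 2 fun s => f s - x) ≤ lpNormW ω 2 fun s => f s - m :=
      ciInf_le hbddr m
    refine step1.trans ?_
    have hgm0 : meanC ω (fun s => f s - m) = 0 := by
      unfold meanC
      simp only [mul_sub, Finset.sum_sub_distrib, ← Finset.sum_mul, hs1, one_mul]
      rw [show (∑ s, (nu ω s : ℂ) * f s) = m from rfl]
      ring
    have hEg : Egy ω (fun s => f s - m) = Egy ω f := Egy_sub_const ω f m
    have hNle : Nfun ω (fun s => f s - m) ≤ Egy ω f / (2 - 2 * μ₂) := by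
      rcases eq_or_ne (fun s => f s - m) (0 : V → ℂ) with hg0 | hg0
      · rw [hg0]
        have hz : Nfun ω (0 : V → ℂ) = 0 := by simp [Nfun]
        rw [hz]
        exact div_nonneg (Egy_nonneg ω hnn hdeg f) h2.le
      · have hNg := Nfun_pos ω hdeg hg0
        have hratio : Qre ω (fun s => f s - m) / Nfun ω (fun s => f s - m) ≤ μ₂ := by
          rw [hμeq]
          exact hgreat.2 ⟨_, hg0, hgm0, rfl⟩
        have hQle : Qre ω (fun s => f s - m) ≤ μ₂ * Nfun ω (fun s => f s - m) := by
          rw [div_le_iff₀ hNg] at hratio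
          linarith
        have hkey := key_identity ω hsym hdeg (fun s => f s - m)
        rw [le_div_iff₀ h2, ← hEg]
        nlinarith
    rw [lpNormW_two_eq, gradNormW_two_eq]
    calc Real.sqrt (∑ s, nu ω s * ‖f s - m‖ ^ 2)
        ≤ Real.sqrt (Egy ω f / (2 - 2 * μ₂)) := Real.sqrt_le_sqrt hNle
      _ = Real.sqrt (Egy ω f) / Real.sqrt (2 - 2 * μ₂) :=
          Real.sqrt_div (Egy_nonneg ω hnn hdeg f) _
      _ = (1 / Real.sqrt (2 - 2 * μ₂)) * Real.sqrt (Egy ω f) := by ring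
  refine le_antisymm (csInf_le ⟨0, fun x hx => hx.1⟩ hcP) ?_
  refine le_csInf ⟨_, hcP⟩ fun b hbmem => ?_
  obtain ⟨hb0, hb⟩ := hbmem
  have hlow : (1 : ℝ) ≤ ⨅ x : ℂ, lpNormW ω 2 fun s => f₀ s - x := by
    apply le_ciInf
    intro x
    rw [lpNormW_two_eq]
    have hxs : (∑ s, nu ω s * ‖f₀ s - x‖ ^ 2) = 1 + ‖x‖ ^ 2 := by
      have h := Nfun_sub_const ω hdeg f₀ hm0 x
      rw [hN0] at h
      exact h
    rw [hxs]
    calc (1 : ℝ) = Real.sqrt 1 := Real.sqrt_one.symm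
      _ ≤ Real.sqrt (1 + ‖x‖ ^ 2) := Real.sqrt_le_sqrt (by nlinarith [sq_nonneg ‖x‖])
  have hgrad : gradNormW ω 2 f₀ = Real.sqrt (2 - 2 * μ₂) := by
    rw [gradNormW_two_eq, hkey0, ← hμeq]
  have hbf := hb f₀
  rw [hgrad] at hbf
  have h1b : (1 : ℝ) ≤ b * Real.sqrt (2 - 2 * μ₂) := le_trans hlow hbf
  rw [div_le_iff₀ hsqrtpos]
  linarith
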